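/- Let G be a group, F a normal subgroup of G, and t ∈ G such that every element of G can be written uniquely as f·t^k with f ∈ F and k ∈ ℤ. Let G act on a set X and let v ∈ X. Suppose there exist an integer m > 0 and γ' ∈ F with (γ'·t^m)·v = v; let n be the least such positive integer and fix γ ∈ F with (γ·t^n)·v = v. Then the stabilizer of v in G equals the set of elements f·(γ·t^n)^k with k ∈ ℤ and f ∈ F satisfying f·v = v. That is, Stab_G(v) is generated by Stab_F(v) := F ∩ Stab_G(v) together with γ·t^n; moreover γ·t^n normalizes Stab_F(v), so Stab_G(v) is the suspension Stab_F(v) ⋊ ⟨γ·t^n⟩ of Stab_F(v). -/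

import Mathlib

/-- Let `G = F ⋊ ⟨t⟩` (every element of `G` is uniquely `f * t ^ k` with `f ∈ F`,
`k ∈ ℤ`, `F` normal) act on a set `X`, and let `v ∈ X`. Suppose some `γ' * t ^ m`
with `γ' ∈ F`, `m > 0` fixes `v`; let `n` be the least such positive integer and
`γ ∈ F` with `(γ * t ^ n) • v = v`. Then the stabilizer of `v` in `G` consists
exactly of the elements `f * (γ * t ^ n) ^ k` with `k ∈ ℤ` and `f ∈ F` fixing `v`;
moreover `γ * t ^ n` normalizes `F ⊓ Stab_G(v)`, so `Stab_G(v)` is the suspension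
of `Stab_F(v)` by `γ * t ^ n`. -/
theorem stabilizer_is_suspension
    {G : Type*} [Group G] (F : Subgroup G) [F.Normal] (t : G)
    (huniq : ∀ g : G, ∃! p : F × ℤ, g = (p.1 : G) * t ^ p.2)
    {X : Type*} [MulAction G X] (v : X)
    (n : ℤ) (hn : 0 < n)
    (hleast : ∀ m : ℤ, 0 < m → (∃ γ' ∈ F, (γ' * t ^ m) • v = v) → n ≤ m)
    (γ : G) (hγ : γ ∈ F) (hfix : (γ * t ^ n) • v = v) :
    (∀ g : G, g ∈ MulAction.stabilizer G v ↔
      ∃ (k : ℤ) (f : G), f ∈ F ∧ f • v = v ∧ g = f * (γ * t ^ n) ^ k) ∧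
    γ * t ^ n ∈ Subgroup.normalizer ((F ⊓ MulAction.stabilizer G v : Subgroup G) : Set G) := by
  classical
  have hF : F.Normal := ‹F.Normal›
  set s := γ * t ^ n with hs
  have hdec : ∀ g : G, ∃ p : F × ℤ, g = (p.1 : G) * t ^ p.2 := fun g => (huniq g).exists
  choose p hp using hdec
  set φ : G → ℤ := fun g => (p g).2 with hφdef
  have key : ∀ (f : G), f ∈ F → ∀ k : ℤ, φ (f * t ^ k) = k := by
    intro f hf k
    have h2 : (f * t ^ k) = ((((⟨f, hf⟩, k) : F × ℤ)).1 : G) * t ^ (((⟨f, hf⟩, k) : F × ℤ)).2 := rfl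
    have := (huniq (f * t ^ k)).unique (hp (f * t ^ k)) h2
    simpa [hφdef] using congrArg Prod.snd this
  have hφone : φ 1 = 0 := by
    have := key 1 F.one_mem 0
    simpa using this
  have hhom : ∀ g h : G, φ (g * h) = φ g + φ h := by
    intro g h
    have hg := hp g
    have hh := hp h
    have hmid : t ^ φ g * ((p h).1 : G) * (t ^ φ g)⁻¹ ∈ F :=
      hF.conj_mem _ (p h).1.2 _
    have hmem : ((p g).1 : G) * (t ^ φ g * ((p h).1 : G) * (t ^ φ g)⁻¹) ∈ F :=
      F.mul_mem (p g).1.2 hmid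
    have heq : g * h = ((p g).1 : G) * (t ^ φ g * ((p h).1 : G) * (t ^ φ g)⁻¹)
        * t ^ (φ g + φ h) := by
      rw [zpow_add]
      nth_rewrite 1 [hg, hh]
      group
      rfl
    rw [heq]
    exact key _ hmem _
  have hφinv : ∀ g : G, φ g⁻¹ = -φ g := by
    intro g
    have := hhom g⁻¹ g
    simp [hφone] at this
    omega
  have hφs : φ s = n := key γ hγ n
  have hspow : ∀ k : ℤ, φ (s ^ k) = n * k := by
    intro k
    induction k using Int.induction_on with
    | zero => simpa using hφone
    | succ i ih =>
        have : s ^ ((i : ℤ) + 1) = s ^ (i : ℤ) * s := by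
          rw [zpow_add, zpow_one]
        rw [this, hhom, ih, hφs]; ring
    | pred i ih =>
        have : s ^ (-(i : ℤ) - 1) = s ^ (-(i : ℤ)) * s⁻¹ := by
          simp [sub_eq_add_neg, zpow_add]
        rw [this, hhom, ih, hφinv, hφs]; ring
  have hsStab : s ∈ MulAction.stabilizer G v := hfix
  constructor
  · intro g
    constructor
    · intro hg
      set a := φ g with ha
      set q := a / n with hq
      set r := a % n with hr
      have hadiv : n * q + r = a := Int.mul_ediv_add_emod a n
      have hr0 : 0 ≤ r := Int.emod_nonneg a hn.ne'
      have hrn : r < n := Int.emod_lt_of_pos a hn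
      set h := g * (s ^ q)⁻¹ with hh
      have hhStab : h ∈ MulAction.stabilizer G v :=
        mul_mem hg (inv_mem (zpow_mem hsStab q))
      have hφh : φ h = r := by
        have h1 : φ ((s ^ q)⁻¹) = -(n * q) := by rw [hφinv, hspow]
        have h2 := hhom g ((s ^ q)⁻¹)
        rw [← hh] at h2
        omega
      have hr0' : r = 0 := by
        by_contra hne
        have hrpos : 0 < r := lt_of_le_of_ne hr0 (Ne.symm hne)
        have hEq : ((p h).1 : G) * t ^ r = h := by
          rw [← hφh]; exact (hp h).symm
        have : n ≤ r := hleast r hrpos ⟨(p h).1, (p h).1.2, by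
          rw [hEq]; exact hhStab⟩
        omega
      have hhF : h ∈ F := by
        have heq : h = ((p h).1 : G) := by
          have := hp h
          rw [show (p h).2 = φ h from rfl, hφh, hr0'] at this
          simpa using this
        rw [heq]; exact (p h).1.2
      refine ⟨q, h, hhF, hhStab, ?_⟩
      rw [hh, inv_mul_cancel_right]
    · rintro ⟨k, f, hfF, hfv, rfl⟩
      exact mul_mem (MulAction.mem_stabilizer_iff.mpr hfv) (zpow_mem hsStab k)
  · rw [Subgroup.mem_normalizer_iff]
    intro g
    simp only [Subgroup.mem_inf]
    constructor
    · rintro ⟨hgF, hgS⟩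
      exact ⟨hF.conj_mem g hgF s, mul_mem (mul_mem hsStab hgS) (inv_mem hsStab)⟩
    · rintro ⟨hgF, hgS⟩
      have hgeq : g = s⁻¹ * (s * g * s⁻¹) * s := by group
      constructor
      · rw [hgeq]
        simpa using hF.conj_mem _ hgF s⁻¹
      · rw [hgeq]
        exact mul_mem (mul_mem (inv_mem hsStab) hgS) hsStab
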